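/- Let 0 < γ < β < 1, κ ∈ (0,1), and K_γ > 0. Then there exists a constant K > 0, depending only on β, γ, κ, K_γ, with the following property: for every y ≥ 1, every continuous function f : ℝ → ℝ satisfying f(x) ≥ K_γ·x^{β−γ} for all x ≥ 1, and every continuous function ζ : [0,∞) → ℝ satisfying ζ(t) = y + (1−κ)·∫₀^t f(ζ(s)) ds for all t ≥ 0, one has ζ(t) ≥ y + K·t^{1/(1−β+γ)} for all t ≥ 0. -/

import Mathlib

open Set Filter Topology

/-- Superadditivity of `x ↦ x ^ p` for `p ≥ 1` on nonnegative reals. -/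
lemma stmt9_superadd {a b p : ℝ} (ha : 0 ≤ a) (hb : 0 ≤ b) (hp : 1 ≤ p) :
    a ^ p + b ^ p ≤ (a + b) ^ p := by
  have hp0 : 0 < p := lt_of_lt_of_le one_pos hp
  rcases eq_or_lt_of_le ha with rfl | ha'
  · simp [Real.zero_rpow hp0.ne']
  rcases eq_or_lt_of_le hb with rfl | hb'
  · simp [Real.zero_rpow hp0.ne']
  have hab : 0 < a + b := by linarith
  have key : ∀ x : ℝ, 0 < x → x ≤ a + b → x ^ p ≤ x * (a + b) ^ (p - 1) := by
    intro x hx hxab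
    have h1 : x ^ p = x * x ^ (p - 1) := by
      have h0 := Real.rpow_add hx 1 (p - 1)
      rw [Real.rpow_one, show (1:ℝ) + (p - 1) = p from by ring] at h0
      exact h0
    rw [h1]
    have h2 : x ^ (p - 1) ≤ (a + b) ^ (p - 1) :=
      Real.rpow_le_rpow hx.le hxab (by linarith)
    exact mul_le_mul_of_nonneg_left h2 hx.le
  have h1 := key a ha' (by linarith)
  have h2 := key b hb' (by linarith)
  have h3 : a * (a + b) ^ (p - 1) + b * (a + b) ^ (p - 1) = (a + b) ^ p := by
    have h4 : (a + b) ^ p = (a + b) * (a + b) ^ (p - 1) := by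
      have h0 := Real.rpow_add hab 1 (p - 1)
      rw [Real.rpow_one, show (1:ℝ) + (p - 1) = p from by ring] at h0
      exact h0
    rw [h4]; ring
  linarith

/-- Bootstrap lemma: if `h 0 ≥ 1` and the derivative of `h` is at least `c > 0`
whenever `h ≥ 1` (on `[0,∞)`), then `h ≥ 1` on `[0,∞)`. -/
lemma stmt9_bootstrap {h d : ℝ → ℝ} (hder : ∀ u, HasDerivAt h (d u) u)
    (h0 : 1 ≤ h 0) {c : ℝ} (hc : 0 < c)
    (hcd : ∀ u, 0 ≤ u → 1 ≤ h u → c ≤ d u) : ∀ t, 0 ≤ t → 1 ≤ h t := by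
  intro t ht
  by_contra hlt
  push_neg at hlt
  have hcont : Continuous h := continuous_iff_continuousAt.2 fun x => (hder x).continuousAt
  have ht0 : 0 < t := by
    rcases eq_or_lt_of_le ht with rfl | h'
    · exact absurd h0 (not_le.2 hlt)
    · exact h'
  set S := Icc (0:ℝ) t ∩ {s | 1 ≤ h s} with hS
  have h0S : (0:ℝ) ∈ S := ⟨⟨le_refl 0, ht⟩, h0⟩
  have hScl : IsClosed S := isClosed_Icc.inter (isClosed_le continuous_const hcont)
  have hbdd : BddAbove S := BddAbove.mono inter_subset_left bddAbove_Icc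
  obtain ⟨u, hu⟩ : ∃ u, u = sSup S := ⟨sSup S, rfl⟩
  have huS : u ∈ S := hu ▸ hScl.csSup_mem ⟨0, h0S⟩ hbdd
  have hu0 : 0 ≤ u := huS.1.1
  have hut : u < t := by
    refine lt_of_le_of_ne huS.1.2 ?_
    rintro rfl
    exact absurd huS.2 (not_le.2 hlt)
  have hgt : ∀ s, u < s → s ≤ t → h s < 1 := by
    intro s hs1 hs2
    by_contra hge
    push_neg at hge
    exact absurd (hu ▸ le_csSup hbdd ⟨⟨hu0.trans hs1.le, hs2⟩, hge⟩) (not_le.2 hs1)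
  have hu1 : h u = 1 := by
    refine le_antisymm ?_ huS.2
    by_contra hgt1
    push_neg at hgt1
    have hmem : {s : ℝ | 1 < h s} ∈ 𝓝[>] u :=
      nhdsWithin_le_nhds ((isOpen_lt continuous_const hcont).mem_nhds hgt1)
    have hio : Ioo u t ∈ 𝓝[>] u := Ioo_mem_nhdsGT hut
    obtain ⟨s, hs1, hs2⟩ := Filter.nonempty_of_mem (Filter.inter_mem hmem hio)
    exact absurd (hgt s hs2.1 hs2.2.le) (not_lt.2 hs1.le)
  have hdu : 0 < d u := hc.trans_le (hcd u hu0 hu1.ge)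
  have hslope := hasDerivAt_iff_tendsto_slope.1 (hder u)
  have hslope' : Filter.Tendsto (slope h u) (𝓝[>] u) (𝓝 (d u)) :=
    hslope.mono_left (nhdsWithin_mono u fun x hx => ne_of_gt hx)
  have hev : ∀ᶠ s in 𝓝[>] u, 0 < slope h u s :=
    hslope'.eventually (eventually_gt_nhds hdu)
  have hio : Ioo u t ∈ 𝓝[>] u := Ioo_mem_nhdsGT hut
  obtain ⟨s, hspos, hs⟩ := (hev.and (Filter.eventually_of_mem hio fun x hx => hx)).exists
  have hsu : 0 < s - u := sub_pos.2 hs.1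
  rw [slope_def_field] at hspos
  have hnum : 0 < h s - h u := by
    by_contra hn
    push_neg at hn
    have : (h s - h u) / (s - u) ≤ 0 := div_nonpos_of_nonpos_of_nonneg hn hsu.le
    linarith
  have : 1 < h s := by rw [hu1] at hnum; linarith
  exact absurd (hgt s hs.1 hs.2.le) (not_lt.2 this.le)

/-- Lower bound for solutions of the integral equation
`ζ(t) = y + (1−κ)∫₀^t f(ζ(s)) ds` when `f(x) ≥ K_γ x^{β−γ}` on `[1,∞)`. -/
theorem stmt_9 (γ β κ Kγ : ℝ) (hγ : 0 < γ) (hγβ : γ < β) (hβ : β < 1)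
    (hκ : κ ∈ Set.Ioo (0:ℝ) 1) (hKγ : 0 < Kγ) :
    ∃ K > (0:ℝ), ∀ y ≥ (1:ℝ), ∀ f : ℝ → ℝ, Continuous f →
      (∀ x ≥ (1:ℝ), Kγ * x ^ (β - γ) ≤ f x) →
      ∀ ζ : ℝ → ℝ, ContinuousOn ζ (Set.Ici 0) →
        (∀ t ≥ (0:ℝ), ζ t = y + (1 - κ) * ∫ s in (0:ℝ)..t, f (ζ s)) →
        ∀ t ≥ (0:ℝ), y + K * t ^ (1 / (1 - β + γ)) ≤ ζ t := by
  have hκ0 : 0 < 1 - κ := by linarith [hκ.2]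
  set α := β - γ with hαdef
  have hα0 : 0 < α := sub_pos.2 hγβ
  have hα1 : α < 1 := by simp only [hαdef]; linarith
  set q := 1 - β + γ with hqdef
  have hq0 : 0 < q := by simp only [hqdef]; linarith
  have hq1 : q < 1 := by simp only [hqdef]; linarith
  have hqα : q = 1 - α := by simp only [hqdef, hαdef]; ring
  set c := q * ((1 - κ) * Kγ) with hcdef
  have hcpos : 0 < c := mul_pos hq0 (mul_pos hκ0 hKγ)
  refine ⟨c ^ (1/q), Real.rpow_pos_of_pos hcpos _, ?_⟩
  intro y hy f hf hflow ζ hζc hζeq t ht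
  have hy0 : (0:ℝ) < y := lt_of_lt_of_le one_pos hy
  -- the extended solution η, defined for all reals
  set Z : ℝ → ℝ := fun s => ζ (max s 0) with hZdef
  have hZcont : Continuous Z :=
    hζc.comp_continuous (continuous_id.max continuous_const) fun x => Set.mem_Ici.2 (le_max_right _ _)
  set g : ℝ → ℝ := fun s => f (Z s) with hgdef
  have hgcont : Continuous g := hf.comp hZcont
  set η : ℝ → ℝ := fun u => y + (1 - κ) * ∫ s in (0:ℝ)..u, g s with hηdef
  have hηeq : ∀ u, 0 ≤ u → η u = ζ u := by
    intro u hu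
    have hint : ∫ s in (0:ℝ)..u, g s = ∫ s in (0:ℝ)..u, f (ζ s) := by
      apply intervalIntegral.integral_congr
      intro s hs
      rw [Set.uIcc_of_le hu] at hs
      simp only [hgdef, hZdef, max_eq_left hs.1]
    simp only [hηdef]
    rw [hint, ← hζeq u hu]
  have hηder : ∀ u, HasDerivAt η ((1 - κ) * g u) u := by
    intro u
    have h1 := (hgcont.integral_hasStrictDerivAt 0 u).hasDerivAt
    exact (h1.const_mul (1 - κ)).const_add y
  have hη0 : η 0 = y := by simp [hηdef]
  have hZη : ∀ u, 0 ≤ u → Z u = η u := by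
    intro u hu
    simp only [hZdef, max_eq_left hu]
    exact (hηeq u hu).symm
  -- bootstrap: η ≥ 1 on [0,∞)
  have hge1 : ∀ u, 0 ≤ u → 1 ≤ η u := by
    refine stmt9_bootstrap hηder (by rw [hη0]; exact hy) (mul_pos hκ0 hKγ) ?_
    intro u hu h1
    have hZu : Z u = η u := hZη u hu
    have h1' : (1:ℝ) ≤ Z u := by rw [hZu]; exact h1
    have hfl := hflow (Z u) h1'
    have hxp : (1:ℝ) ≤ Z u ^ α := Real.one_le_rpow h1' hα0.le
    have : (1 - κ) * Kγ ≤ (1 - κ) * (Kγ * Z u ^ α) := by nlinarith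
    calc (1 - κ) * Kγ ≤ (1 - κ) * (Kγ * Z u ^ α) := this
      _ ≤ (1 - κ) * f (Z u) := by nlinarith
      _ = (1 - κ) * g u := rfl
  have hηcont : Continuous η := continuous_iff_continuousAt.2 fun x => (hηder x).continuousAt
  -- the comparison function F
  set F : ℝ → ℝ := fun s => η s ^ q - c * s with hFdef
  have hFder : ∀ x : ℝ, 0 < x → HasDerivAt F ((1 - κ) * g x * q * η x ^ (q - 1) - c) x := by
    intro x hx
    have hηx : (1:ℝ) ≤ η x := hge1 x hx.le
    have hne : η x ≠ 0 := by linarith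
    have h1 : HasDerivAt (fun s => η s ^ q) ((1 - κ) * g x * q * η x ^ (q - 1)) x :=
      (hηder x).rpow_const (Or.inl hne)
    have h2 : HasDerivAt (fun s : ℝ => c * s) c x := by
      simpa using (hasDerivAt_id x).const_mul c
    exact h1.sub h2
  have hFmono : MonotoneOn F (Ici (0:ℝ)) := by
    apply monotoneOn_of_deriv_nonneg (convex_Ici 0)
    · apply Continuous.continuousOn
      apply Continuous.sub ?_ (continuous_const.mul continuous_id)
      exact (continuous_iff_continuousAt.2 fun x =>
        Real.continuousAt_rpow_const x q (Or.inr hq0.le)).comp hηcont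
    · rw [interior_Ici]
      intro x hx
      exact ((hFder x hx).differentiableAt).differentiableWithinAt
    · rw [interior_Ici]
      intro x hx
      rw [(hFder x hx).deriv]
      have hηx : (1:ℝ) ≤ η x := hge1 x (le_of_lt hx)
      have hηxp : (0:ℝ) < η x := lt_of_lt_of_le one_pos hηx
      have hA : (0:ℝ) < η x ^ α := Real.rpow_pos_of_pos hηxp α
      have hqm1 : q - 1 = -α := by rw [hqα]; ring
      have hpow : η x ^ (q - 1) = (η x ^ α)⁻¹ := by
        rw [hqm1, Real.rpow_neg hηxp.le]
      have hg : Kγ * η x ^ α ≤ g x := by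
        have := hflow (η x) hηx
        simpa [hgdef, hZη x hx.le] using this
      have key : c ≤ (1 - κ) * g x * q * (η x ^ α)⁻¹ := by
        have h1 : c = (1 - κ) * (Kγ * η x ^ α) * q * (η x ^ α)⁻¹ := by
          field_simp
          ring
        rw [h1]
        have h2 : (1 - κ) * (Kγ * η x ^ α) ≤ (1 - κ) * g x := by nlinarith
        have h3 : (0:ℝ) ≤ q * (η x ^ α)⁻¹ := by positivity
        nlinarith [mul_le_mul_of_nonneg_right h2 h3]
      rw [hpow]
      linarith
  -- conclude
  have hFle : F 0 ≤ F t := hFmono (self_mem_Ici) ht ht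
  have hF0 : F 0 = y ^ q := by simp [hFdef, hη0]
  have hηt1 : (1:ℝ) ≤ η t := hge1 t ht
  have hηtp : (0:ℝ) < η t := lt_of_lt_of_le one_pos hηt1
  have h1 : y ^ q + c * t ≤ η t ^ q := by
    have : F t = η t ^ q - c * t := rfl
    rw [hF0, this] at hFle
    linarith
  have hp1 : (1:ℝ) ≤ 1/q := by
    rw [le_div_iff₀ hq0]
    linarith
  have hyq : (0:ℝ) ≤ y ^ q := (Real.rpow_pos_of_pos hy0 q).le
  have hct : (0:ℝ) ≤ c * t := mul_nonneg hcpos.le ht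
  have hsup : (y ^ q) ^ (1/q) + (c * t) ^ (1/q) ≤ (y ^ q + c * t) ^ (1/q) :=
    stmt9_superadd hyq hct hp1
  have hmono : (y ^ q + c * t) ^ (1/q) ≤ (η t ^ q) ^ (1/q) :=
    Real.rpow_le_rpow (by positivity) h1 (by positivity)
  have hback : (η t ^ q) ^ (1/q) = η t := by
    rw [← Real.rpow_mul hηtp.le, mul_one_div_cancel hq0.ne', Real.rpow_one]
  have hyy : (y ^ q) ^ (1/q) = y := by
    rw [← Real.rpow_mul hy0.le, mul_one_div_cancel hq0.ne', Real.rpow_one]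
  have hctq : (c * t) ^ (1/q) = c ^ (1/q) * t ^ (1/q) := Real.mul_rpow hcpos.le ht
  have : y + c ^ (1/q) * t ^ (1/q) ≤ η t := by
    rw [← hback]
    calc y + c ^ (1/q) * t ^ (1/q) = (y ^ q) ^ (1/q) + (c * t) ^ (1/q) := by
          rw [hyy, hctq]
      _ ≤ (y ^ q + c * t) ^ (1/q) := hsup
      _ ≤ (η t ^ q) ^ (1/q) := hmono
  rw [← hηeq t ht]
  exact this
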